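/- For parameters β ∈ ℝ and λ ∈ (0,1), define g(a) = ∫_0^λ e^{−2ax²−βx} dx and h(a) = ∫_λ^1 e^{−2ax²−βx} dx for a > 0. Then the function a ↦ g(a)/(g(a) + h(a)) is monotone increasing on (0, ∞): for all 0 < a ≤ a′, g(a)/(g(a)+h(a)) ≤ g(a′)/(g(a′)+h(a′)). -/

import Mathlib

open Real intervalIntegral

private lemma cont_aux (b c : ℝ) : Continuous (fun x : ℝ => Real.exp (-2 * b * x ^ 2 - c * x)) := by
  continuity

private lemma intble_aux (b c u v : ℝ) :
    IntervalIntegrable (fun x : ℝ => Real.exp (-2 * b * x ^ 2 - c * x)) MeasureTheory.volume u v :=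
  (cont_aux b c).intervalIntegrable u v

private lemma pos_aux (b c u v : ℝ) (huv : u < v) :
    0 < ∫ x in u..v, Real.exp (-2 * b * x ^ 2 - c * x) :=
  intervalIntegral.intervalIntegral_pos_of_pos (intble_aux b c u v) (fun x => Real.exp_pos _) huv

theorem stmt_19 (β lam : ℝ) (hlam : lam ∈ Set.Ioo (0:ℝ) 1)
    (a a' : ℝ) (ha : 0 < a) (haa' : a ≤ a') :
    (∫ x in (0:ℝ)..lam, Real.exp (-2 * a * x ^ 2 - β * x)) /
        ((∫ x in (0:ℝ)..lam, Real.exp (-2 * a * x ^ 2 - β * x)) +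
          ∫ x in lam..1, Real.exp (-2 * a * x ^ 2 - β * x)) ≤
      (∫ x in (0:ℝ)..lam, Real.exp (-2 * a' * x ^ 2 - β * x)) /
        ((∫ x in (0:ℝ)..lam, Real.exp (-2 * a' * x ^ 2 - β * x)) +
          ∫ x in lam..1, Real.exp (-2 * a' * x ^ 2 - β * x)) := by
  obtain ⟨hl0, hl1⟩ := hlam
  set G := ∫ x in (0:ℝ)..lam, Real.exp (-2 * a * x ^ 2 - β * x) with hG
  set H := ∫ x in lam..1, Real.exp (-2 * a * x ^ 2 - β * x) with hH
  set G' := ∫ x in (0:ℝ)..lam, Real.exp (-2 * a' * x ^ 2 - β * x) with hG'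
  set H' := ∫ x in lam..1, Real.exp (-2 * a' * x ^ 2 - β * x) with hH'
  have hGpos : 0 < G := pos_aux a β 0 lam hl0
  have hHpos : 0 < H := pos_aux a β lam 1 hl1
  have hG'pos : 0 < G' := pos_aux a' β 0 lam hl0
  have hH'pos : 0 < H' := pos_aux a' β lam 1 hl1
  set c : ℝ := 2 * (a' - a) with hc
  have hc0 : 0 ≤ c := by simp [hc]; linarith
  -- key pointwise bounds
  have claim1 : G ≤ Real.exp (c * lam ^ 2) * G' := by
    rw [hG, hG', ← intervalIntegral.integral_const_mul]
    apply intervalIntegral.integral_mono_on hl0.le (intble_aux a β 0 lam)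
      ((continuous_const.mul (cont_aux a' β)).intervalIntegrable 0 lam)
    intro x hx
    simp only [Pi.mul_apply]
    rw [← Real.exp_add]
    apply Real.exp_le_exp.mpr
    have hx2 : x ^ 2 ≤ lam ^ 2 := by nlinarith [hx.1, hx.2]
    nlinarith [hx.1, hx.2]
  have claim2 : H' ≤ Real.exp (-(c * lam ^ 2)) * H := by
    rw [hH, hH', ← intervalIntegral.integral_const_mul]
    apply intervalIntegral.integral_mono_on hl1.le (intble_aux a' β lam 1)
      ((continuous_const.mul (cont_aux a β)).intervalIntegrable lam 1)
    intro x hx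
    simp only [Pi.mul_apply]
    rw [← Real.exp_add]
    apply Real.exp_le_exp.mpr
    have hx2 : lam ^ 2 ≤ x ^ 2 := by nlinarith [hx.1, hx.2, hl0]
    nlinarith [hx.1, hx.2]
  have key : G * H' ≤ G' * H := by
    calc G * H' ≤ (Real.exp (c * lam ^ 2) * G') * (Real.exp (-(c * lam ^ 2)) * H) := by
          apply mul_le_mul claim1 claim2 hH'pos.le
          positivity
      _ = G' * H := by
          rw [Real.exp_neg]
          field_simp
  rw [div_le_div_iff₀ (by linarith) (by linarith)]
  nlinarith [key]
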